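/- Let κ > 0 and let I : (0,1) → [0,∞) be a concave continuous function. Define ᾱ_1 := 2^κ · sup_{0<s<1} I(s), and ᾱ_2 := sup_{0<s<1} [I(s)/(s(1−s))]·(s^{1/(κ−1)}+(1−s)^{1/(κ−1)})^{κ−1} if κ < 1; ᾱ_2 := 2·I(1/2) if κ = 1; ᾱ_2 := inf_{0<s<1} [I(s)/(s(1−s))]·(s^{1/(κ−1)}+(1−s)^{1/(κ−1)})^{κ−1} if κ > 1. Then ᾱ_1 ≥ ᾱ_2. -/

import Mathlib

open Set

/-- The upper bound `ᾱ₁ = 2^κ ⬝ sup_{0<s<1} I(s)` of Theorem 1. -/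
noncomputable def alphaBar1 (κ : ℝ) (I : ℝ → ℝ) : ℝ :=
  2 ^ κ * ⨆ s : Ioo (0 : ℝ) 1, I s

/-- The upper bound `ᾱ₂` of Theorem 2, defined by cases on `κ`. -/
noncomputable def alphaBar2 (κ : ℝ) (I : ℝ → ℝ) : ℝ :=
  if κ < 1 then
    ⨆ s : Ioo (0 : ℝ) 1, I s / ((s : ℝ) * (1 - (s : ℝ))) *
      ((s : ℝ) ^ (1 / (κ - 1)) + (1 - (s : ℝ)) ^ (1 / (κ - 1))) ^ (κ - 1)
  else if κ = 1 then 2 * I (1 / 2)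
  else
    ⨅ s : Ioo (0 : ℝ) 1, I s / ((s : ℝ) * (1 - (s : ℝ))) *
      ((s : ℝ) ^ (1 / (κ - 1)) + (1 - (s : ℝ)) ^ (1 / (κ - 1))) ^ (κ - 1)

/-- Pointwise key inequality in the case `κ < 1`. -/
lemma key_lt_one {κ : ℝ} (hκ : 0 < κ) (hκ1 : κ < 1) {a : ℝ} (ha : 0 < a) (ha1 : a < 1) :
    (a ^ (1 / (κ - 1)) + (1 - a) ^ (1 / (κ - 1))) ^ (κ - 1) ≤ 2 ^ κ * (a * (1 - a)) := by
  set b : ℝ := 1 - a with hb_def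
  have hb : 0 < b := by simp [hb_def]; linarith
  set p : ℝ := 1 / (κ - 1) with hp_def
  set q : ℝ := -p with hq_def
  have hκne : κ - 1 ≠ 0 := by intro h; exact absurd (by linarith : κ = 1) (ne_of_lt hκ1)
  have hq_eq : q = 1 / (1 - κ) := by
    rw [hq_def, hp_def, eq_div_iff (by linarith : (1:ℝ) - κ ≠ 0)]
    field_simp
    ring
  have hq1 : 1 ≤ q := by
    rw [hq_eq]
    rw [le_div_iff₀ (by linarith : (0:ℝ) < 1 - κ)]
    linarith
  -- power-mean inequality : 2 ^ (1 - q) ≤ a ^ q + b ^ q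
  have hpm : (2:ℝ) ^ (1 - q) ≤ a ^ q + b ^ q := by
    have hc := (convexOn_rpow hq1).2 (mem_Ici.mpr ha.le) (mem_Ici.mpr hb.le)
      (by norm_num : (0:ℝ) ≤ 1/2) (by norm_num : (0:ℝ) ≤ 1/2) (by norm_num)
    simp only [smul_eq_mul] at hc
    have hab1 : (1/2:ℝ) * a + (1/2) * b = 1/2 := by rw [hb_def]; ring
    rw [hab1] at hc
    have h12 : ((1:ℝ)/2) ^ q = 2 ^ (-q) := by
      rw [one_div, Real.inv_rpow (by norm_num : (0:ℝ) ≤ 2),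
        ← Real.rpow_neg (by norm_num : (0:ℝ) ≤ 2)]
    have h2q : (2:ℝ) ^ (1 - q) = 2 * 2 ^ (-q) := by
      rw [show (1 - q) = 1 + (-q) by ring, Real.rpow_add (by norm_num : (0:ℝ) < 2),
        Real.rpow_one]
    rw [h2q, ← h12]
    linarith
  -- the identity  a^p + b^p = (a*b)^p * (a^q + b^q)
  have hpq : p + q = 0 := by rw [hq_def]; ring
  have hid : a ^ p + b ^ p = (a * b) ^ p * (a ^ q + b ^ q) := by
    rw [Real.mul_rpow ha.le hb.le, mul_add]
    have h1 : a ^ p * b ^ p * a ^ q = b ^ p := by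
      rw [mul_right_comm, ← Real.rpow_add ha, hpq, Real.rpow_zero, one_mul]
    have h2 : a ^ p * b ^ p * b ^ q = a ^ p := by
      rw [mul_assoc, ← Real.rpow_add hb, hpq, Real.rpow_zero, mul_one]
    rw [h1, h2, add_comm]
  have habpos : 0 < a * b := mul_pos ha hb
  have hsumq_pos : 0 < a ^ q + b ^ q :=
    add_pos (Real.rpow_pos_of_pos ha q) (Real.rpow_pos_of_pos hb q)
  calc (a ^ p + b ^ p) ^ (κ - 1)
      = ((a * b) ^ p) ^ (κ - 1) * (a ^ q + b ^ q) ^ (κ - 1) := by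
        rw [hid, Real.mul_rpow (Real.rpow_nonneg habpos.le p) hsumq_pos.le]
    _ = (a * b) * (a ^ q + b ^ q) ^ (κ - 1) := by
        have hone : ((a * b) ^ p) ^ (κ - 1) = a * b := by
          rw [← Real.rpow_mul habpos.le,
            show p * (κ - 1) = 1 by rw [hp_def]; field_simp, Real.rpow_one]
        rw [hone]
    _ ≤ (a * b) * (2 ^ (1 - q)) ^ (κ - 1) := by
        refine mul_le_mul_of_nonneg_left ?_ habpos.le
        exact Real.rpow_le_rpow_of_nonpos (Real.rpow_pos_of_pos (by norm_num) _) hpm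
          (by linarith)
    _ = 2 ^ κ * (a * b) := by
        rw [← Real.rpow_mul (by norm_num : (0:ℝ) ≤ 2), mul_comm]
        congr 1
        rw [show (1 - q) * (κ - 1) = κ by rw [hq_def, hp_def]; field_simp; ring]

/-- The inequality of Theorem 3: `ᾱ₂ ≤ ᾱ₁` for every `κ > 0` and every nonnegative
concave continuous function `I` on `(0,1)`. -/
theorem stmt2 (κ : ℝ) (hκ : 0 < κ) (I : ℝ → ℝ)
    (hI_concave : ConcaveOn ℝ (Ioo 0 1) I)
    (hI_cont : ContinuousOn I (Ioo 0 1))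
    (hI_nonneg : ∀ s ∈ Ioo (0 : ℝ) 1, 0 ≤ I s) :
    alphaBar2 κ I ≤ alphaBar1 κ I := by
  have h2 : (0:ℝ) < 2 ^ κ := Real.rpow_pos_of_pos (by norm_num) κ
  have hhalf : (1/2 : ℝ) ∈ Ioo (0:ℝ) 1 := by norm_num
  haveI : Nonempty (Ioo (0:ℝ) 1) := ⟨⟨1/2, hhalf⟩⟩
  have hbdd : BddAbove (range fun s : Ioo (0:ℝ) 1 => I s) := by
    refine ⟨2 * I (1/2), ?_⟩
    rintro _ ⟨⟨s, hs⟩, rfl⟩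
    have hs' : (1 - s) ∈ Ioo (0:ℝ) 1 := ⟨by linarith [hs.2], by linarith [hs.1]⟩
    have hc := hI_concave.2 hs hs' (by norm_num : (0:ℝ) ≤ 1/2)
      (by norm_num : (0:ℝ) ≤ 1/2) (by norm_num)
    simp only [smul_eq_mul] at hc
    have h1 : (1/2:ℝ) * s + 1/2 * (1 - s) = 1/2 := by ring
    rw [h1] at hc
    have := hI_nonneg _ hs'
    simp only
    linarith
  have hsupI : ∀ s : Ioo (0:ℝ) 1, I s ≤ ⨆ t : Ioo (0:ℝ) 1, I t :=
    fun s => le_ciSup hbdd s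
  rcases lt_trichotomy κ 1 with hκ1 | hκ1 | hκ1
  · -- κ < 1
    rw [alphaBar2, if_pos hκ1, alphaBar1]
    refine ciSup_le fun s => ?_
    obtain ⟨s, hs⟩ := s
    have ha : 0 < s := hs.1
    have hb : 0 < 1 - s := by linarith [hs.2]
    have habpos : 0 < s * (1 - s) := mul_pos ha hb
    have hkey := key_lt_one hκ hκ1 ha hs.2
    calc I s / (s * (1 - s)) * ((s ^ (1/(κ-1)) + (1-s) ^ (1/(κ-1))) ^ (κ-1))
        ≤ I s / (s * (1 - s)) * (2 ^ κ * (s * (1 - s))) :=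
          mul_le_mul_of_nonneg_left hkey (div_nonneg (hI_nonneg s hs) habpos.le)
      _ = 2 ^ κ * I s := by field_simp
      _ ≤ 2 ^ κ * ⨆ t : Ioo (0:ℝ) 1, I t :=
          mul_le_mul_of_nonneg_left (hsupI ⟨s, hs⟩) h2.le
  · -- κ = 1
    subst hκ1
    rw [alphaBar2, if_neg (lt_irrefl 1), if_pos rfl, alphaBar1, Real.rpow_one]
    have := hsupI ⟨1/2, hhalf⟩
    simp only at this
    linarith
  · -- κ > 1
    rw [alphaBar2, if_neg (not_lt.mpr hκ1.le), if_neg (ne_of_gt hκ1), alphaBar1]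
    have hbb : BddBelow (range fun s : Ioo (0:ℝ) 1 =>
        I s / ((s:ℝ) * (1 - (s:ℝ))) *
          (((s:ℝ)) ^ (1/(κ-1)) + (1 - (s:ℝ)) ^ (1/(κ-1))) ^ (κ-1)) := by
      refine ⟨0, ?_⟩
      rintro _ ⟨⟨s, hs⟩, rfl⟩
      have ha : 0 < s := hs.1
      have hb : 0 < 1 - s := by linarith [hs.2]
      refine mul_nonneg (div_nonneg (hI_nonneg s hs) (mul_pos ha hb).le) ?_
      exact Real.rpow_nonneg
        (add_nonneg (Real.rpow_nonneg ha.le _) (Real.rpow_nonneg hb.le _)) _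
    refine le_trans (ciInf_le hbb ⟨1/2, hhalf⟩) ?_
    have hκne : κ - 1 ≠ 0 := sub_ne_zero.mpr (ne_of_gt hκ1)
    have hval : I (1/2) / ((1/2 : ℝ) * (1 - 1/2)) *
        (((1/2:ℝ)) ^ (1/(κ-1)) + (1 - (1/2:ℝ)) ^ (1/(κ-1))) ^ (κ-1)
        = 2 ^ κ * I (1/2) := by
      have h12 : (1:ℝ) - 1/2 = 1/2 := by norm_num
      rw [h12]
      have hsum : ((1/2:ℝ)) ^ (1/(κ-1)) + ((1/2:ℝ)) ^ (1/(κ-1))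
          = 2 * ((1/2:ℝ)) ^ (1/(κ-1)) := by ring
      rw [hsum, Real.mul_rpow (by norm_num) (Real.rpow_nonneg (by norm_num) _),
        ← Real.rpow_mul (by norm_num : (0:ℝ) ≤ 1/2),
        one_div_mul_cancel hκne, Real.rpow_one]
      have h2κ : (2:ℝ) ^ (κ - 1) * (1/2 : ℝ) = 2 ^ κ / 4 := by
        rw [show κ - 1 = κ + (-1) by ring, Real.rpow_add (by norm_num : (0:ℝ) < 2),
          Real.rpow_neg_one]
        ring
      rw [h2κ]
      field_simp
      ring
    rw [hval]
    exact mul_le_mul_of_nonneg_left (hsupI ⟨1/2, hhalf⟩) h2.le
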